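/- Steinerberger's spectral-gap inequality fails on the punctured disks: for every pair of constants c₁ > 0 and c₂ > 0 there exists ε₀ ∈ (0, 1/2) such that for all ε ∈ (0, ε₀) and any maximum point x_ε of u_ε on Ω_ε = B(0,1) \ B̄(0,ε), one has λ_max(D²u_ε(x_ε)) > −c₁·exp(−c₂·4/(1−ε)); here 4/(1−ε) equals the ratio diam(Ω_ε)/inrad(Ω_ε) of the diameter to the inradius of Ω_ε. -/

import Mathlib

open Real Set Metric Filter Topology

noncomputable section

abbrev E2 := EuclideanSpace ℝ (Fin 2)

/-- Second partial derivative `∂²u/∂xᵢ∂xⱼ` at `x`. -/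
noncomputable def pd2 (u : E2 → ℝ) (x : E2) (i j : Fin 2) : ℝ :=
  fderiv ℝ (fun y => fderiv ℝ u y (EuclideanSpace.single j 1)) x (EuclideanSpace.single i 1)

/-- The Hessian matrix `D²u(x)`. -/
noncomputable def Hess (u : E2 → ℝ) (x : E2) : Matrix (Fin 2) (Fin 2) ℝ :=
  Matrix.of fun i j => pd2 u x i j

/-- The Laplacian `Δu(x)`. -/
noncomputable def lap (u : E2 → ℝ) (x : E2) : ℝ := pd2 u x 0 0 + pd2 u x 1 1

/-- The largest eigenvalue of a symmetric 2×2 real matrix. -/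
noncomputable def lambdaMax (M : Matrix (Fin 2) (Fin 2) ℝ) : ℝ :=
  ((M 0 0 + M 1 1) + Real.sqrt ((M 0 0 - M 1 1) ^ 2 + (M 0 1 + M 1 0) ^ 2)) / 2

/-- `u` is the torsion function of `U`: continuous up to the boundary, `C²` inside,
`Δu = -1` in `U` and `u = 0` on `∂U`. -/
def IsTorsion (U : Set E2) (u : E2 → ℝ) : Prop :=
  ContinuousOn u (closure U) ∧ (∀ x ∈ U, ContDiffAt ℝ 2 u x) ∧
    (∀ x ∈ U, lap u x = -1) ∧ (∀ x ∈ frontier U, u x = 0)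


lemma deriv2_nonpos_of_isLocalMax {φ : ℝ → ℝ} {c : ℝ}
    (hφ : ∀ᶠ t in 𝓝 (0:ℝ), DifferentiableAt ℝ φ t)
    (hd : HasDerivAt (deriv φ) c 0) (hmax : IsLocalMax φ 0) : c ≤ 0 := by
  by_contra hc
  push_neg at hc
  have h0 : deriv φ 0 = 0 := hmax.deriv_eq_zero
  have hslope : Tendsto (slope (deriv φ) 0) (𝓝[≠] 0) (𝓝 c) :=
    hasDerivAt_iff_tendsto_slope.1 hd
  have hpos : ∀ᶠ t in 𝓝[>] (0:ℝ), 0 < deriv φ t := by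
    have h1 : ∀ᶠ t in 𝓝[>] (0:ℝ), 0 < slope (deriv φ) 0 t :=
      (hslope.mono_left (nhdsWithin_mono 0 (fun t ht => ne_of_gt ht))).eventually
        (eventually_gt_nhds hc)
    filter_upwards [h1, self_mem_nhdsWithin] with t ht ht0
    have hs : slope (deriv φ) 0 t = deriv φ t / t := by simp [slope_def_field, h0]
    rw [hs] at ht
    have := mul_pos ht ht0
    rwa [div_mul_cancel₀ _ (ne_of_gt ht0)] at this
  obtain ⟨a, ha, hIoo⟩ := (nhdsGT_basis (0:ℝ)).eventually_iff.mp hpos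
  obtain ⟨b, hb, hIb⟩ := Metric.eventually_nhds_iff.mp hφ
  set r := min a b / 2 with hr
  have hr0 : 0 < r := by positivity
  have hra : r < a := by
    have := min_le_left a b; simp only [hr]; linarith
  have hrb : r < b := by
    have := min_le_right a b; simp only [hr]; linarith
  have hdiff : ∀ t ∈ Icc (0:ℝ) r, DifferentiableAt ℝ φ t := by
    intro t ht
    apply hIb
    rw [Real.dist_eq, sub_zero, abs_of_nonneg ht.1]
    exact lt_of_le_of_lt ht.2 hrb
  have hmono : StrictMonoOn φ (Icc (0:ℝ) r) := by
    apply strictMonoOn_of_deriv_pos (convex_Icc 0 r)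
    · exact fun t ht => (hdiff t ht).continuousAt.continuousWithinAt
    · intro t ht
      rw [interior_Icc] at ht
      exact hIoo ⟨ht.1, ht.2.trans hra⟩
  have hev : ∀ᶠ t in 𝓝[>] (0:ℝ), φ t ≤ φ 0 ∧ t < r := by
    filter_upwards [hmax.filter_mono nhdsWithin_le_nhds,
      eventually_nhdsWithin_of_eventually_nhds (eventually_lt_nhds hr0)] with t h1 h2
    exact ⟨h1, h2⟩
  obtain ⟨t, ⟨⟨ht1, ht2⟩, ht0⟩⟩ := (hev.and self_mem_nhdsWithin).exists
  have ht0' : (0:ℝ) < t := ht0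
  have : φ 0 < φ t :=
    hmono ⟨le_refl 0, le_of_lt hr0⟩ ⟨le_of_lt ht0', le_of_lt ht2⟩ ht0'
  linarith

lemma pd2_diag_nonpos {g : E2 → ℝ} {x : E2} (hg : ContDiffAt ℝ 2 g x)
    (hmax : IsLocalMax g x) (i : Fin 2) : pd2 g x i i ≤ 0 := by
  set e : E2 := EuclideanSpace.single i 1 with he
  set line : ℝ → E2 := fun t => x + t • e with hline
  have hline0 : line 0 = x := by simp [hline]
  have hlined : ∀ t : ℝ, HasDerivAt line e t := by
    intro t
    simpa [hline] using ((hasDerivAt_id t).smul_const e).const_add x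
  have hlinec : Continuous line := by
    continuity
  have htend : Tendsto line (𝓝 0) (𝓝 x) := by
    rw [← hline0]; exact hlinec.continuousAt
  have hev : ∀ᶠ t in 𝓝 (0:ℝ), ContDiffAt ℝ 2 g (line t) :=
    htend.eventually (hg.eventually (by norm_num))
  have hφd : ∀ᶠ t in 𝓝 (0:ℝ), DifferentiableAt ℝ (g ∘ line) t := by
    filter_upwards [hev] with t ht
    exact (ht.differentiableAt two_ne_zero).comp t (hlined t).differentiableAt
  have hderiv : ∀ᶠ t in 𝓝 (0:ℝ), deriv (g ∘ line) t = fderiv ℝ g (line t) e := by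
    filter_upwards [hev] with t ht
    exact (((ht.differentiableAt two_ne_zero).hasFDerivAt).comp_hasDerivAt t (hlined t)).deriv
  -- the function ψ
  set F := fderiv ℝ g with hF
  have hFd : DifferentiableAt ℝ F x := (hg.fderiv_right (m := 1) one_add_one_eq_two.le).differentiableAt one_ne_zero
  have hcomp : HasDerivAt (F ∘ line) (fderiv ℝ F x e) 0 := by
    have hFd' : HasFDerivAt F (fderiv ℝ F x) (line 0) := by rw [hline0]; exact hFd.hasFDerivAt
    exact hFd'.comp_hasDerivAt 0 (hlined 0)
  have hψ : HasDerivAt (fun t => (F (line t)) e) ((fderiv ℝ F x e) e) 0 := by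
    have happ := ((ContinuousLinearMap.apply ℝ ℝ e).hasFDerivAt
      (x := F (line 0))).comp_hasDerivAt 0 hcomp
    exact happ
  have hd' : HasDerivAt (deriv (g ∘ line)) ((fderiv ℝ F x e) e) 0 := by
    apply hψ.congr_of_eventuallyEq
    filter_upwards [hderiv] with t ht
    exact ht
  have hmax' : IsLocalMax (g ∘ line) 0 := by
    have : IsLocalMax g (line 0) := by rwa [hline0]
    exact this.comp_continuous hlinec.continuousAt
  have hle := deriv2_nonpos_of_isLocalMax hφd hd' hmax'
  have hpd : pd2 g x i i = (fderiv ℝ F x e) e := by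
    unfold pd2
    rw [← he]
    rw [show (fun y => fderiv ℝ g y e) = (fun y => (F y) e) from rfl]
    rw [fderiv_clm_apply hFd (differentiableAt_const e)]
    simp
  rw [hpd]
  exact hle

noncomputable def qf : E2 → ℝ := fun y => y 0 * y 0 + y 1 * y 1

lemma projd (i : Fin 2) (y : E2) :
    HasFDerivAt (fun y : E2 => y i) (EuclideanSpace.proj i : E2 →L[ℝ] ℝ) y :=
  (EuclideanSpace.proj i : E2 →L[ℝ] ℝ).hasFDerivAt

lemma proj_single (i j : Fin 2) :
    (EuclideanSpace.proj i : E2 →L[ℝ] ℝ) (EuclideanSpace.single j 1)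
      = if i = j then 1 else 0 := by
  simp [EuclideanSpace.single_apply, eq_comm]

lemma qf_hasFDerivAt (y : E2) :
    HasFDerivAt qf ((2 * y 0) • (EuclideanSpace.proj 0 : E2 →L[ℝ] ℝ)
      + (2 * y 1) • (EuclideanSpace.proj 1 : E2 →L[ℝ] ℝ)) y := by
  have h := ((projd 0 y).mul (projd 0 y)).add ((projd 1 y).mul (projd 1 y))
  have heq : (y 0 • (EuclideanSpace.proj 0 : E2 →L[ℝ] ℝ) + y 0 • (EuclideanSpace.proj 0 : E2 →L[ℝ] ℝ))
      + (y 1 • (EuclideanSpace.proj 1 : E2 →L[ℝ] ℝ) + y 1 • (EuclideanSpace.proj 1 : E2 →L[ℝ] ℝ))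
      = (2 * y 0) • (EuclideanSpace.proj 0 : E2 →L[ℝ] ℝ)
      + (2 * y 1) • (EuclideanSpace.proj 1 : E2 →L[ℝ] ℝ) := by
    apply ContinuousLinearMap.ext
    intro v
    simp
    ring
  rw [← heq]
  exact h

lemma qf_contDiff : ContDiff ℝ 2 qf := by
  have h0 : ContDiff ℝ 2 (fun y : E2 => y 0) := (EuclideanSpace.proj (𝕜 := ℝ) (0:Fin 2)).contDiff
  have h1 : ContDiff ℝ 2 (fun y : E2 => y 1) := (EuclideanSpace.proj (𝕜 := ℝ) (1:Fin 2)).contDiff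
  exact (h0.mul h0).add (h1.mul h1)

lemma fderiv_qf_apply (y : E2) (j : Fin 2) :
    fderiv ℝ qf y (EuclideanSpace.single j 1) = 2 * y j := by
  rw [(qf_hasFDerivAt y).fderiv]
  fin_cases j <;> simp [proj_single, Fin.mk_zero, Fin.mk_one]

lemma pd2_qf (x : E2) (i j : Fin 2) : pd2 qf x i j = if i = j then 2 else 0 := by
  unfold pd2
  have hev : (fun y => fderiv ℝ qf y (EuclideanSpace.single j 1))
      = fun y : E2 => 2 * y j := funext fun y => fderiv_qf_apply y j
  rw [hev]
  have h2 : HasFDerivAt (fun y : E2 => 2 * y j)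
      ((2:ℝ) • (EuclideanSpace.proj j : E2 →L[ℝ] ℝ)) x := by
    simpa using (projd j x).const_mul 2
  rw [h2.fderiv]
  fin_cases i <;> fin_cases j <;>
    simp [proj_single, Fin.mk_zero, Fin.mk_one]

lemma lap_qf (x : E2) : lap qf x = 4 := by
  simp only [lap, pd2_qf]
  norm_num

lemma pd2_comb {f g : E2 → ℝ} {x : E2} (hf : ContDiffAt ℝ 2 f x) (hg : ContDiffAt ℝ 2 g x)
    (a b : ℝ) (i j : Fin 2) :
    pd2 (fun y => a * f y + b * g y) x i j = a * pd2 f x i j + b * pd2 g x i j := by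
  set e : E2 := EuclideanSpace.single j 1 with he
  have hev : (fun y => fderiv ℝ (fun z => a * f z + b * g z) y e)
      =ᶠ[𝓝 x] (fun y => a * (fderiv ℝ f y e) + b * (fderiv ℝ g y e)) := by
    filter_upwards [hf.eventually (by norm_num), hg.eventually (by norm_num)] with y hfy hgy
    have hfd : DifferentiableAt ℝ f y := hfy.differentiableAt two_ne_zero
    have hgd : DifferentiableAt ℝ g y := hgy.differentiableAt two_ne_zero
    have : fderiv ℝ (fun z => a * f z + b * g z) y
        = a • fderiv ℝ f y + b • fderiv ℝ g y := by
      rw [fderiv_fun_add ((hfd.const_mul a)) ((hgd.const_mul b)),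
        fderiv_const_mul hfd, fderiv_const_mul hgd]
    rw [this]
    simp
  unfold pd2
  rw [hev.fderiv_eq]
  -- differentiability of the first-derivative maps
  have hFd : DifferentiableAt ℝ (fun y => fderiv ℝ f y e) x := by
    have h1 : DifferentiableAt ℝ (fderiv ℝ f) x :=
      (hf.fderiv_right (m := 1) one_add_one_eq_two.le).differentiableAt one_ne_zero
    exact (ContinuousLinearMap.apply ℝ ℝ e).differentiable.differentiableAt.comp x h1
  have hGd : DifferentiableAt ℝ (fun y => fderiv ℝ g y e) x := by
    have h1 : DifferentiableAt ℝ (fderiv ℝ g) x :=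
      (hg.fderiv_right (m := 1) one_add_one_eq_two.le).differentiableAt one_ne_zero
    exact (ContinuousLinearMap.apply ℝ ℝ e).differentiable.differentiableAt.comp x h1
  rw [fderiv_fun_add ((hFd.const_mul a)) ((hGd.const_mul b)),
    fderiv_const_mul hFd, fderiv_const_mul hGd]
  simp [he]

lemma lap_comb {f g : E2 → ℝ} {x : E2} (hf : ContDiffAt ℝ 2 f x) (hg : ContDiffAt ℝ 2 g x)
    (a b : ℝ) :
    lap (fun y => a * f y + b * g y) x = a * lap f x + b * lap g x := by
  simp only [lap, pd2_comb hf hg]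
  ring

noncomputable def vf (c : ℝ) : E2 → ℝ := fun y => (1 - qf y) / 4 + c * Real.log (qf y)

lemma vf_contDiffAt (c : ℝ) {y : E2} (hq : qf y ≠ 0) : ContDiffAt ℝ 2 (vf c) y := by
  apply ContDiffAt.add
  · exact (contDiffAt_const.sub qf_contDiff.contDiffAt).div_const 4
  · exact contDiffAt_const.mul ((Real.contDiffAt_log.2 hq).comp y qf_contDiff.contDiffAt)

lemma vf_hasFDerivAt (c : ℝ) {y : E2} (hq : qf y ≠ 0) :
    HasFDerivAt (vf c)
      (((-1:ℝ)/4) • ((2 * y 0) • (EuclideanSpace.proj 0 : E2 →L[ℝ] ℝ)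
          + (2 * y 1) • (EuclideanSpace.proj 1 : E2 →L[ℝ] ℝ))
        + (c * (qf y)⁻¹) • ((2 * y 0) • (EuclideanSpace.proj 0 : E2 →L[ℝ] ℝ)
          + (2 * y 1) • (EuclideanSpace.proj 1 : E2 →L[ℝ] ℝ))) y := by
  set Lq := ((2 * y 0) • (EuclideanSpace.proj 0 : E2 →L[ℝ] ℝ)
      + (2 * y 1) • (EuclideanSpace.proj 1 : E2 →L[ℝ] ℝ)) with hLq
  have hqd := qf_hasFDerivAt y
  have h1 : HasFDerivAt (fun z => (1 - qf z) / 4) (((-1:ℝ)/4) • Lq) y := by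
    have hfe : (fun z : E2 => (1 - qf z) / 4) = fun z => (1/4 : ℝ) * (1 - qf z) := by
      funext z; ring
    rw [hfe]
    have := (hqd.const_sub 1).const_mul (1/4 : ℝ)
    refine this.congr_fderiv ?_
    ext1 v
    simp [hLq]
    ring
  have hlog : HasFDerivAt (fun z => Real.log (qf z)) ((qf y)⁻¹ • Lq) y :=
    (Real.hasDerivAt_log hq).comp_hasFDerivAt y hqd
  have h2 : HasFDerivAt (fun z => c * Real.log (qf z)) ((c * (qf y)⁻¹) • Lq) y := by
    have := hlog.const_mul c
    refine this.congr_fderiv ?_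
    rw [smul_smul]
  exact h1.add h2

lemma vf_fderiv_apply (c : ℝ) {y : E2} (hq : qf y ≠ 0) (j : Fin 2) :
    fderiv ℝ (vf c) y (EuclideanSpace.single j 1) = 2 * y j * (c / qf y - 1/4) := by
  rw [(vf_hasFDerivAt c hq).fderiv]
  fin_cases j <;>
    simp [proj_single, Fin.mk_zero, Fin.mk_one] <;> field_simp <;> ring

lemma pd2_vf (c : ℝ) {x : E2} (hq : qf x ≠ 0) (i j : Fin 2) :
    pd2 (vf c) x i j = 2 * (if i = j then 1 else 0) * (c / qf x - 1/4)
      - 4 * c * x i * x j / (qf x)^2 := by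
  unfold pd2
  have hevq : ∀ᶠ y in 𝓝 x, qf y ≠ 0 :=
    qf_contDiff.continuous.continuousAt.eventually_ne hq
  have hev : (fun y => fderiv ℝ (vf c) y (EuclideanSpace.single j 1))
      =ᶠ[𝓝 x] (fun y => (2 * y j) * (c * (qf y)⁻¹ - 1/4)) := by
    filter_upwards [hevq] with y hy
    rw [vf_fderiv_apply c hy j]
    rw [div_eq_mul_inv]
  rw [hev.fderiv_eq]
  have hA : HasFDerivAt (fun y : E2 => 2 * y j)
      ((2:ℝ) • (EuclideanSpace.proj j : E2 →L[ℝ] ℝ)) x := by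
    simpa using (projd j x).const_mul 2
  have hB : HasFDerivAt (fun y : E2 => c * (qf y)⁻¹ - 1/4)
      ((c * -((qf x)^2)⁻¹) • ((2 * x 0) • (EuclideanSpace.proj 0 : E2 →L[ℝ] ℝ)
        + (2 * x 1) • (EuclideanSpace.proj 1 : E2 →L[ℝ] ℝ))) x := by
    have hinv : HasFDerivAt (fun y : E2 => (qf y)⁻¹)
        ((-((qf x)^2)⁻¹) • ((2 * x 0) • (EuclideanSpace.proj 0 : E2 →L[ℝ] ℝ)
          + (2 * x 1) • (EuclideanSpace.proj 1 : E2 →L[ℝ] ℝ))) x :=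
      (hasDerivAt_inv hq).comp_hasFDerivAt x (qf_hasFDerivAt x)
    have := (hinv.const_mul c).sub_const (1/4 : ℝ)
    refine this.congr_fderiv ?_
    rw [smul_smul]
  have hAB := hA.fun_mul hB
  rw [hAB.fderiv]
  fin_cases i <;> fin_cases j <;>
    simp [proj_single, Fin.mk_zero, Fin.mk_one] <;> field_simp <;> ring

lemma lap_vf (c : ℝ) {x : E2} (hq : qf x ≠ 0) : lap (vf c) x = -1 := by
  have h00 := pd2_vf c hq 0 0
  have h11 := pd2_vf c hq 1 1
  have hsum : x 0 * x 0 + x 1 * x 1 = qf x := rfl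
  simp only [lap, h00, h11, if_pos rfl, eq_self_iff_true, if_true]
  field_simp
  linear_combination (-(16:ℝ) * c) * hsum

lemma lap_nonpos_of_isLocalMax {g : E2 → ℝ} {x : E2} (hg : ContDiffAt ℝ 2 g x)
    (hmax : IsLocalMax g x) : lap g x ≤ 0 := by
  have h0 := pd2_diag_nonpos hg hmax 0
  have h1 := pd2_diag_nonpos hg hmax 1
  simp only [lap]; linarith

lemma qf_eq_norm_sq (y : E2) : qf y = ‖y‖ ^ 2 := by
  rw [EuclideanSpace.norm_eq, Real.sq_sqrt (by positivity)]
  simp [qf, Fin.sum_univ_two, sq]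

lemma qf_nonneg (y : E2) : 0 ≤ qf y := by rw [qf_eq_norm_sq]; positivity

lemma maxprin {U : Set E2} (hUo : IsOpen U) (hsub : closure U ⊆ closedBall 0 1)
    {w : E2 → ℝ} (hwc : ContinuousOn w (closure U)) (hw2 : ∀ y ∈ U, ContDiffAt ℝ 2 w y)
    (hlap : ∀ y ∈ U, lap w y = 0) (hfr : ∀ y ∈ frontier U, w y = 0) :
    ∀ y ∈ closure U, w y ≤ 0 := by
  intro y₀ hy₀
  have hK : IsCompact (closure U) :=
    (isCompact_closedBall (0:E2) 1).of_isClosed_subset isClosed_closure hsub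
  have key : ∀ δ : ℝ, 0 < δ → w y₀ ≤ δ := by
    intro δ hδ
    set h : E2 → ℝ := fun y => 1 * w y + δ * qf y with hh
    have hcont : ContinuousOn h (closure U) :=
      (continuousOn_const.mul hwc).add
        (continuousOn_const.mul qf_contDiff.continuous.continuousOn)
    obtain ⟨z, hzK, hzmax⟩ := hK.exists_isMaxOn ⟨y₀, hy₀⟩ hcont
    have hzfr : z ∈ frontier U := by
      rcases (em (z ∈ U)) with hzU | hzU
      · exfalso
        have hKnz : closure U ∈ 𝓝 z := mem_nhds_iff.2 ⟨U, subset_closure, hUo, hzU⟩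
        have hlm : IsLocalMax h z := hzmax.isLocalMax hKnz
        have hc2 : ContDiffAt ℝ 2 h z :=
          (contDiffAt_const.mul (hw2 z hzU)).add
            (contDiffAt_const.mul qf_contDiff.contDiffAt)
        have hle : lap h z ≤ 0 := lap_nonpos_of_isLocalMax hc2 hlm
        have heq : lap h z = 1 * lap w z + δ * lap qf z :=
          lap_comb (hw2 z hzU) qf_contDiff.contDiffAt 1 δ
        rw [heq, hlap z hzU, lap_qf] at hle
        nlinarith
      · rw [hUo.frontier_eq]; exact ⟨hzK, hzU⟩
    have hwz : w z = 0 := hfr z hzfr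
    have hqz : qf z ≤ 1 := by
      rw [qf_eq_norm_sq]
      have := hsub hzK
      rw [mem_closedBall, dist_zero_right] at this
      nlinarith [norm_nonneg z]
    have hmax0 := hzmax hy₀
    simp only [hh, hwz] at hmax0
    have h1 : w y₀ + δ * qf y₀ ≤ δ * qf z := by simpa using hmax0
    nlinarith [qf_nonneg y₀]
  by_contra hpos
  push_neg at hpos
  have := key (w y₀ / 2) (by linarith)
  linarith

/-- Steinerberger's spectral-gap inequality fails on the punctured disks
`Ω_ε = B(0,1) \ B̄(0,ε)`: for every `c₁, c₂ > 0` there is `ε₀ ∈ (0,1/2)` such that for all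
`ε ∈ (0,ε₀)` and any maximum point `x_ε` of the torsion function `u_ε` of `Ω_ε`,
`λ_max(D²u_ε(x_ε)) > -c₁·exp(-c₂·4/(1-ε))`, where `4/(1-ε) = diam(Ω_ε)/inrad(Ω_ε)`. -/
theorem spectral_gap_inequality_fails_on_annuli
    (c₁ c₂ : ℝ) (hc₁ : 0 < c₁) (hc₂ : 0 < c₂) :
    ∃ ε₀ ∈ Ioo (0:ℝ) (1/2), ∀ ε ∈ Ioo (0:ℝ) ε₀, ∀ u : E2 → ℝ, ∀ x : E2,
      IsTorsion (ball (0:E2) 1 \ closedBall (0:E2) ε) u →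
      x ∈ ball (0:E2) 1 \ closedBall (0:E2) ε →
      IsMaxOn u (ball (0:E2) 1 \ closedBall (0:E2) ε) x →
      lambdaMax (Hess u x) > -c₁ * Real.exp (-c₂ * (4 / (1 - ε))) := by
  refine ⟨1/4, ⟨by norm_num, by norm_num⟩, ?_⟩
  intro ε hε u x hT hx hmax
  obtain ⟨hε0, hε1⟩ := hε
  set Ω : Set E2 := ball (0:E2) 1 \ closedBall (0:E2) ε with hΩ
  have hUo : IsOpen Ω := isOpen_ball.sdiff Metric.isClosed_closedBall
  have hε1' : ε < 1 := by linarith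
  have hlog : Real.log (ε^2) < 0 := Real.log_neg (by positivity) (by nlinarith)
  set c : ℝ := -((1 - ε^2)/4) / Real.log (ε^2) with hcdef
  have hmem : ∀ y : E2, y ∈ Ω ↔ (‖y‖ < 1 ∧ ε < ‖y‖) := by
    intro y
    simp [hΩ, mem_ball, mem_closedBall, dist_zero_right, not_le, and_comm]
  have hclos : ∀ y ∈ closure Ω, ε ≤ ‖y‖ ∧ ‖y‖ ≤ 1 := by
    have hsub : closure Ω ⊆ {y : E2 | ε ≤ ‖y‖ ∧ ‖y‖ ≤ 1} := by
      apply closure_minimal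
      · intro y hy
        rw [hmem] at hy
        exact ⟨le_of_lt hy.2, le_of_lt hy.1⟩
      · have h1 : IsClosed {y : E2 | ε ≤ ‖y‖} := isClosed_le continuous_const continuous_norm
        have h2 : IsClosed {y : E2 | ‖y‖ ≤ 1} := isClosed_le continuous_norm continuous_const
        exact h1.inter h2
    exact fun y hy => hsub hy
  have hq0 : ∀ y ∈ closure Ω, qf y ≠ 0 := by
    intro y hy
    have h1 := (hclos y hy).1
    rw [qf_eq_norm_sq]
    have : 0 < ‖y‖ := lt_of_lt_of_le hε0 h1
    positivity
  have hfrv : ∀ y ∈ frontier Ω, vf c y = 0 := by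
    intro y hy
    rw [hUo.frontier_eq] at hy
    obtain ⟨hyc, hyn⟩ := hy
    obtain ⟨h1, h2⟩ := hclos y hyc
    rw [hmem] at hyn
    push_neg at hyn
    have hcase : ‖y‖ = 1 ∨ ‖y‖ = ε := by
      rcases lt_or_ge ‖y‖ 1 with h | h
      · exact Or.inr (le_antisymm (hyn h) h1)
      · exact Or.inl (le_antisymm h2 h)
    rcases hcase with h | h
    · simp [vf, qf_eq_norm_sq, h]
    · have hqy : qf y = ε^2 := by rw [qf_eq_norm_sq, h]
      have hlε : Real.log ε ≠ 0 := (Real.log_neg hε0 hε1').ne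
      simp only [vf, hqy, hcdef]
      field_simp
      ring

  obtain ⟨hucont, hu2, hulap, hufr⟩ := hT
  have hqΩ : ∀ y ∈ Ω, qf y ≠ 0 := fun y hy => hq0 y (subset_closure hy)
  have hvcont : ContinuousOn (vf c) (closure Ω) := fun y hy =>
    ((vf_contDiffAt c (hq0 y hy)).continuousAt).continuousWithinAt
  have hsubcb : closure Ω ⊆ closedBall 0 1 := by
    intro y hy
    rw [mem_closedBall, dist_zero_right]
    exact (hclos y hy).2
  -- uniqueness via the maximum principle, both directions
  have hle1 : ∀ y ∈ closure Ω, 1 * u y + (-1) * vf c y ≤ 0 := by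
    apply maxprin hUo hsubcb
    · exact (continuousOn_const.mul hucont).add (continuousOn_const.mul hvcont)
    · exact fun y hy => (contDiffAt_const.mul (hu2 y hy)).add
        (contDiffAt_const.mul (vf_contDiffAt c (hqΩ y hy)))
    · intro y hy
      rw [lap_comb (hu2 y hy) (vf_contDiffAt c (hqΩ y hy)) 1 (-1), hulap y hy,
        lap_vf c (hqΩ y hy)]
      ring
    · intro y hy
      rw [hufr y hy, hfrv y hy]
      ring
  have hle2 : ∀ y ∈ closure Ω, 1 * vf c y + (-1) * u y ≤ 0 := by
    apply maxprin hUo hsubcb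
    · exact (continuousOn_const.mul hvcont).add (continuousOn_const.mul hucont)
    · exact fun y hy => (contDiffAt_const.mul (vf_contDiffAt c (hqΩ y hy))).add
        (contDiffAt_const.mul (hu2 y hy))
    · intro y hy
      rw [lap_comb (vf_contDiffAt c (hqΩ y hy)) (hu2 y hy) 1 (-1), hulap y hy,
        lap_vf c (hqΩ y hy)]
      ring
    · intro y hy
      rw [hufr y hy, hfrv y hy]
      ring
  have huv : ∀ y ∈ Ω, u y = vf c y := by
    intro y hy
    have h1 := hle1 y (subset_closure hy)
    have h2 := hle2 y (subset_closure hy)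
    linarith
  have hΩnx : Ω ∈ 𝓝 x := hUo.mem_nhds hx
  have huveq : u =ᶠ[𝓝 x] vf c := eventually_of_mem hΩnx huv
  have hlmv : IsLocalMax (vf c) x := (hmax.isLocalMax hΩnx).congr huveq
  have hqx : qf x ≠ 0 := hqΩ x hx
  have hqxpos : 0 < qf x := lt_of_le_of_ne (qf_nonneg x) (Ne.symm hqx)
  have hcrit : ∀ j : Fin 2, 2 * x j * (c / qf x - 1/4) = 0 := by
    intro j
    rw [← vf_fderiv_apply c hqx j, hlmv.fderiv_eq_zero]
    simp
  have hc4 : c / qf x = 1/4 := by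
    by_contra hne
    have hfac : c / qf x - 1/4 ≠ 0 := fun h => hne (by linarith [sub_eq_zero.1 h])
    have hx0 : x 0 = 0 := by
      have := hcrit 0
      rcases mul_eq_zero.1 this with h | h
      · rcases mul_eq_zero.1 h with h' | h'
        · norm_num at h'
        · exact h'
      · exact absurd h hfac
    have hx1 : x 1 = 0 := by
      have := hcrit 1
      rcases mul_eq_zero.1 this with h | h
      · rcases mul_eq_zero.1 h with h' | h'
        · norm_num at h'
        · exact h'
      · exact absurd h hfac
    apply hqx
    simp [qf, hx0, hx1]
  have hcq : c = qf x / 4 := by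
    field_simp at hc4
    linarith
  -- pd2 of u equals pd2 of vf at x
  have hfd : ∀ y ∈ Ω, fderiv ℝ u y = fderiv ℝ (vf c) y := by
    intro y hy
    have hyev : u =ᶠ[𝓝 y] vf c := eventually_of_mem (hUo.mem_nhds hy) huv
    exact hyev.fderiv_eq
  have hpd : ∀ i j : Fin 2, pd2 u x i j = pd2 (vf c) x i j := by
    intro i j
    unfold pd2
    have hev' : (fun y => fderiv ℝ u y (EuclideanSpace.single j 1))
        =ᶠ[𝓝 x] (fun y => fderiv ℝ (vf c) y (EuclideanSpace.single j 1)) := by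
      filter_upwards [hΩnx] with y hy
      rw [hfd y hy]
    rw [hev'.fderiv_eq]
  have hpdv : ∀ i j : Fin 2, pd2 u x i j = -(x i * x j) / qf x := by
    intro i j
    rw [hpd i j, pd2_vf c hqx i j, hc4, hcq]
    field_simp
    ring
  have hsum : x 0 * x 0 + x 1 * x 1 = qf x := rfl
  have hM : lambdaMax (Hess u x) = 0 := by
    have e00 : Hess u x 0 0 = -(x 0 * x 0) / qf x := hpdv 0 0
    have e01 : Hess u x 0 1 = -(x 0 * x 1) / qf x := hpdv 0 1
    have e10 : Hess u x 1 0 = -(x 1 * x 0) / qf x := hpdv 1 0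
    have e11 : Hess u x 1 1 = -(x 1 * x 1) / qf x := hpdv 1 1
    unfold lambdaMax
    rw [e00, e01, e10, e11]
    have htr : -(x 0 * x 0) / qf x + -(x 1 * x 1) / qf x = -1 := by
      have h : -(x 0 * x 0) / qf x + -(x 1 * x 1) / qf x
          = -((x 0 * x 0 + x 1 * x 1) / qf x) := by ring
      rw [h, hsum, div_self hqx]
    have harg : (-(x 0 * x 0) / qf x - -(x 1 * x 1) / qf x) ^ 2
        + (-(x 0 * x 1) / qf x + -(x 1 * x 0) / qf x) ^ 2 = 1 := by
      have h : (-(x 0 * x 0) / qf x - -(x 1 * x 1) / qf x) ^ 2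
          + (-(x 0 * x 1) / qf x + -(x 1 * x 0) / qf x) ^ 2
          = ((x 0 * x 0 + x 1 * x 1) / qf x) ^ 2 := by ring
      rw [h, hsum, div_self hqx, one_pow]
    rw [htr, harg, Real.sqrt_one]
    norm_num
  rw [hM]
  have hexp := Real.exp_pos (-c₂ * (4 / (1 - ε)))
  nlinarith
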